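/- arXiv:1406.1899 — 2 statements merged into one kernel-verified Lean document; each statement's English description precedes it below -/
import Mathlib

section
/- Let 0 < γ < 1, r₀ > 0, 0 < r ≤ r₀, and let y = (0,0,r), z = (0,0,cr) with c ∈ [2/3, 4/5]. Then there exists C > 0 depending only on γ such that (1/r₀^γ) ∫_{ℝ³₋} |x - y|^{γ-2} |x - z|^{-2} dx ≤ (C/r₀)(r/r₀)^{γ-1}, where ℝ³₋ = {x ∈ ℝ³ : x₃ < 0}. -/
open MeasureTheory

noncomputable section
namespace HSAux
open Set Metric

abbrev E3 : Type := EuclideanSpace ℝ (Fin 3)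
variable {γ r c : ℝ}

def f (γ r : ℝ) : ℝ → ℝ := (Ici r).indicator (fun t => t ^ (γ - 4))

lemma f_nonneg (hr : 0 < r) (t : ℝ) : 0 ≤ f γ r t :=
  Set.indicator_nonneg (fun s hs => Real.rpow_nonneg (le_trans hr.le hs) _) t

lemma f_meas : Measurable (f γ r) :=
  Measurable.indicator (by fun_prop) measurableSet_Ici

lemma h_integrable (hγ1 : γ < 1) (hr : 0 < r) :
    Integrable (fun v : E3 => f γ r ‖v‖) := by
  have hd : (Module.finrank ℝ E3 : ℝ) < 4 - γ := by
    rw [finrank_euclideanSpace_fin]; norm_num; linarith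
  have hint : Integrable (fun v : E3 => (1 + ‖v‖) ^ (-(4 - γ))) :=
    integrable_one_add_norm hd
  set k : ℝ := 1 + r⁻¹ with hk
  have hkpos : 0 < k := by positivity
  refine Integrable.mono' (hint.const_mul (k ^ (4 - γ)))
    ((f_meas.comp measurable_norm).aestronglyMeasurable) ?_
  filter_upwards with v
  rw [Real.norm_eq_abs, abs_of_nonneg (f_nonneg hr _)]
  by_cases hv : ‖v‖ ∈ Ici r
  · rw [f, Set.indicator_of_mem hv]
    have hv' : r ≤ ‖v‖ := hv
    have h0 : 1 ≤ ‖v‖ * r⁻¹ := by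
      rw [← div_eq_mul_inv]; exact (one_le_div hr).mpr hv'
    have h1 : 1 + ‖v‖ ≤ k * ‖v‖ := by
      rw [hk]; nlinarith [norm_nonneg v]
    have h2 : (1 + ‖v‖) / k ≤ ‖v‖ := by
      rw [div_le_iff₀ hkpos]; linarith [mul_comm k ‖v‖ ▸ h1]
    have hpos : (0:ℝ) < (1 + ‖v‖) / k := by positivity
    calc ‖v‖ ^ (γ - 4) ≤ ((1 + ‖v‖) / k) ^ (γ - 4) :=
          Real.rpow_le_rpow_of_nonpos hpos h2 (by linarith)
      _ = k ^ (4 - γ) * (1 + ‖v‖) ^ (-(4 - γ)) := by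
          rw [Real.div_rpow (by positivity) hkpos.le, neg_sub,
            show (4:ℝ) - γ = -(γ - 4) by ring, Real.rpow_neg hkpos.le,
            div_eq_mul_inv, mul_comm]
  · rw [f, Set.indicator_of_notMem hv]
    positivity

lemma h_value (hγ1 : γ < 1) (hr : 0 < r) :
    ∫ v : E3, f γ r ‖v‖ =
      (3 * (volume (ball (0:E3) 1)).toReal / (1 - γ)) * r ^ (γ - 1) := by
  rw [integral_fun_norm_addHaar volume (f γ r)]
  rw [finrank_euclideanSpace_fin]
  have key : ∫ y in Ioi (0:ℝ), y ^ (3 - 1) • f γ r y = ∫ y in Ioi r, y ^ (γ - 2) := by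
    have e1 : ∀ y : ℝ, y ^ (3-1) • f γ r y = (Ici r).indicator (fun y => y^2 * y ^ (γ-4)) y := by
      intro y
      simp only [smul_eq_mul, f, Set.indicator_apply]
      split_ifs <;> simp
    simp_rw [e1]
    rw [setIntegral_indicator measurableSet_Ici]
    have e2 : Ioi (0:ℝ) ∩ Ici r = Ici r :=
      Set.inter_eq_self_of_subset_right (fun y hy => lt_of_lt_of_le hr hy)
    rw [e2, integral_Ici_eq_integral_Ioi]
    apply setIntegral_congr_fun measurableSet_Ioi
    intro y hy
    have hy0 : (0:ℝ) < y := lt_trans hr hy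
    dsimp only
    rw [← Real.rpow_natCast y 2, ← Real.rpow_add hy0]
    congr 1
    push_cast; ring
  rw [key, integral_Ioi_rpow_of_lt (by linarith) hr, nsmul_eq_mul, smul_eq_mul,
    show γ - 2 + 1 = γ - 1 by ring]
  have h1 : (1:ℝ) - γ ≠ 0 := by intro h; linarith
  have h2 : γ - 1 ≠ 0 := by intro h; linarith
  field_simp
  simp only [measureReal_def]
  ring

lemma abs_coord_le_norm (v : E3) (i : Fin 3) : |v i| ≤ ‖v‖ := by
  rw [EuclideanSpace.norm_eq]
  have h : |v i| = Real.sqrt (‖v i‖ ^ 2) := by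
    rw [Real.sqrt_sq_eq_abs]; simp [Real.norm_eq_abs, abs_abs]
  rw [h]
  apply Real.sqrt_le_sqrt
  exact Finset.single_le_sum (f := fun j => ‖v j‖ ^ 2) (fun j _ => by positivity)
    (Finset.mem_univ i)

lemma meas_S : MeasurableSet {x : E3 | x 2 < 0} :=
  measurableSet_lt (by fun_prop : Measurable fun x : E3 => x 2) measurable_const

lemma norm_sub_single (a b : ℝ) :
    ‖EuclideanSpace.single (2 : Fin 3) a - EuclideanSpace.single (2 : Fin 3) b‖ = |a - b| := by
  rw [← dist_eq_norm, EuclideanSpace.dist_single_same, Real.dist_eq]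

lemma coord_bound {x : E3} {a : ℝ} (hx : x 2 < 0) (ha : 0 < a) :
    a ≤ ‖x - EuclideanSpace.single (2 : Fin 3) a‖ := by
  have h := abs_coord_le_norm (x - EuclideanSpace.single (2 : Fin 3) a) 2
  have e : (x - EuclideanSpace.single (2 : Fin 3) a) 2 = x 2 - a := by
    simp [EuclideanSpace.single_apply]
  rw [e] at h
  calc a ≤ a - x 2 := by linarith
    _ = |x 2 - a| := by rw [abs_sub_comm, abs_of_nonneg (by linarith)]
    _ ≤ _ := h

lemma pointwise (x : E3) (hx : x 2 < 0) (hr : 0 < r)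
    (hc : c ∈ Set.Icc (2/3 : ℝ) (4/5)) :
    ‖x - EuclideanSpace.single (2 : Fin 3) r‖ ^ (γ - 2) *
      (‖x - EuclideanSpace.single (2 : Fin 3) (c * r)‖ ^ 2)⁻¹ ≤
    (9/4) * ‖x - EuclideanSpace.single (2 : Fin 3) r‖ ^ (γ - 4) := by
  obtain ⟨hc1, hc2⟩ := hc
  have hcr : 0 < c * r := by nlinarith
  have hY : r ≤ ‖x - EuclideanSpace.single (2 : Fin 3) r‖ := coord_bound hx hr
  have hZ : c * r ≤ ‖x - EuclideanSpace.single (2 : Fin 3) (c * r)‖ := coord_bound hx hcr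
  set Y := ‖x - EuclideanSpace.single (2 : Fin 3) r‖ with hYdef
  set Z := ‖x - EuclideanSpace.single (2 : Fin 3) (c * r)‖ with hZdef
  have hZ' : (2/3) * r ≤ Z := le_trans (by nlinarith) hZ
  have hYpos : 0 < Y := lt_of_lt_of_le hr hY
  have hZpos : 0 < Z := lt_of_lt_of_le (by nlinarith) hZ'
  have hYZ : Y ≤ (3/2) * Z := by
    have edec : x - EuclideanSpace.single (2 : Fin 3) r =
        (x - EuclideanSpace.single (2 : Fin 3) (c * r)) +
          (EuclideanSpace.single (2 : Fin 3) (c * r) - EuclideanSpace.single (2 : Fin 3) r) := by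
      abel
    have t1 : Y ≤ Z + ‖EuclideanSpace.single (2 : Fin 3) (c * r) -
        EuclideanSpace.single (2 : Fin 3) r‖ := by
      rw [hYdef, edec]; exact norm_add_le _ _
    rw [norm_sub_single] at t1
    have t2 : |c * r - r| = (1 - c) * r := by
      rw [abs_of_nonpos (by nlinarith)]; ring
    rw [t2] at t1
    nlinarith
  have step : (Z ^ 2)⁻¹ ≤ (9/4) * (Y ^ 2)⁻¹ := by
    have h49 : (4/9 : ℝ) * Y ^ 2 ≤ Z ^ 2 := by nlinarith
    have h1 := one_div_le_one_div_of_le (by positivity : (0:ℝ) < (4/9) * Y ^ 2) h49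
    rw [one_div, one_div] at h1
    calc (Z ^ 2)⁻¹ ≤ ((4/9) * Y ^ 2)⁻¹ := h1
      _ = (9/4) * (Y ^ 2)⁻¹ := by rw [mul_inv]; norm_num
  calc Y ^ (γ - 2) * (Z ^ 2)⁻¹ ≤ Y ^ (γ - 2) * ((9/4) * (Y ^ 2)⁻¹) :=
        mul_le_mul_of_nonneg_left step (Real.rpow_nonneg hYpos.le _)
    _ = (9/4) * (Y ^ (γ - 2) * (Y ^ 2)⁻¹) := by ring
    _ = (9/4) * Y ^ (γ - 4) := by
        rw [← Real.rpow_natCast Y 2, ← Real.rpow_neg hYpos.le, ← Real.rpow_add hYpos]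
        congr 2
        push_cast; ring

/-- Main integral bound with the scaling factor made explicit. -/
lemma integral_bound (hγ1 : γ < 1) (hr : 0 < r) (hc : c ∈ Set.Icc (2/3 : ℝ) (4/5)) :
    (∫ x in {x : E3 | x 2 < 0},
        ‖x - EuclideanSpace.single (2 : Fin 3) r‖ ^ (γ - 2) *
          (‖x - EuclideanSpace.single (2 : Fin 3) (c * r)‖ ^ 2)⁻¹) ≤
      ((9/4) * (3 * (volume (ball (0:E3) 1)).toReal / (1 - γ))) * r ^ (γ - 1) := by
  set yv : E3 := EuclideanSpace.single (2 : Fin 3) r with hyv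
  set F : E3 → ℝ := fun x =>
    ‖x - yv‖ ^ (γ - 2) * (‖x - EuclideanSpace.single (2 : Fin 3) (c * r)‖ ^ 2)⁻¹ with hF
  have hG : Integrable (fun x : E3 => (9/4) * f γ r ‖x - yv‖) := by
    have := (h_integrable (γ := γ) hγ1 hr).comp_sub_right yv
    exact this.const_mul _
  have hle : ∫ x in {x : E3 | x 2 < 0}, F x ≤ ∫ x : E3, (9/4) * f γ r ‖x - yv‖ := by
    rw [← integral_indicator meas_S]
    apply integral_mono_of_nonneg
    · filter_upwards with x
      apply Set.indicator_nonneg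
      intro a _
      exact mul_nonneg (Real.rpow_nonneg (norm_nonneg _) _) (inv_nonneg.2 (sq_nonneg _))
    · exact hG
    · filter_upwards with x
      by_cases hx : x ∈ {x : E3 | x 2 < 0}
      · rw [Set.indicator_of_mem hx]
        have hmem : ‖x - yv‖ ∈ Ici r := coord_bound hx hr
        have : f γ r ‖x - yv‖ = ‖x - yv‖ ^ (γ - 4) := Set.indicator_of_mem hmem _
        rw [this]
        exact pointwise x hx hr hc
      · rw [Set.indicator_of_notMem hx]
        exact mul_nonneg (by norm_num) (f_nonneg hr _)
  have hval : ∫ x : E3, (9/4) * f γ r ‖x - yv‖ =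
      ((9/4) * (3 * (volume (ball (0:E3) 1)).toReal / (1 - γ))) * r ^ (γ - 1) := by
    rw [integral_const_mul, integral_sub_right_eq_self (fun v : E3 => f γ r ‖v‖) yv,
      h_value hγ1 hr]
    ring
  calc _ ≤ _ := hle
    _ = _ := hval

end HSAux
end

/-- Estimate of the integral over the lower half-space:
`(1/r₀^γ) ∫_{ℝ³₋} |x-y|^{γ-2}|x-z|⁻² dx ≤ (C/r₀)(r/r₀)^{γ-1}`,
with `y = (0,0,r)`, `z = (0,0,cr)`, `c ∈ [2/3,4/5]`, and `C = C(γ)`. -/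
theorem half_space_integral_estimate (γ : ℝ) (hγ0 : 0 < γ) (hγ1 : γ < 1) :
    ∃ C : ℝ, 0 < C ∧ ∀ r₀ r c : ℝ, 0 < r₀ → 0 < r → r ≤ r₀ →
      c ∈ Set.Icc (2 / 3 : ℝ) (4 / 5) →
      (1 / r₀ ^ γ) *
        (∫ x in {x : EuclideanSpace ℝ (Fin 3) | x 2 < 0},
          ‖x - EuclideanSpace.single (2 : Fin 3) r‖ ^ (γ - 2) *
            (‖x - EuclideanSpace.single (2 : Fin 3) (c * r)‖ ^ 2)⁻¹) ≤
        (C / r₀) * (r / r₀) ^ (γ - 1) := by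
  classical
  set V : ℝ := (volume (Metric.ball (0 : HSAux.E3) 1)).toReal with hV
  have hVpos : 0 < V := by
    rw [hV]
    exact ENNReal.toReal_pos (Metric.measure_ball_pos volume _ one_pos).ne'
      measure_ball_lt_top.ne
  refine ⟨(9/4) * (3 * V / (1 - γ)), by
    have h1γ : (0:ℝ) < 1 - γ := by linarith
    positivity, ?_⟩
  intro r₀ r c hr₀ hr hrr₀ hc
  have hI := HSAux.integral_bound (γ := γ) hγ1 hr hc
  have h0 : (0:ℝ) ≤ 1 / r₀ ^ γ := by positivity
  calc (1 / r₀ ^ γ) *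
        (∫ x in {x : EuclideanSpace ℝ (Fin 3) | x 2 < 0},
          ‖x - EuclideanSpace.single (2 : Fin 3) r‖ ^ (γ - 2) *
            (‖x - EuclideanSpace.single (2 : Fin 3) (c * r)‖ ^ 2)⁻¹) ≤
      (1 / r₀ ^ γ) * (((9/4) * (3 * V / (1 - γ))) * r ^ (γ - 1)) :=
        mul_le_mul_of_nonneg_left hI h0
    _ = (((9/4) * (3 * V / (1 - γ))) / r₀) * (r / r₀) ^ (γ - 1) := by
        have e1 : (r / r₀) ^ (γ - 1) = r ^ (γ - 1) / r₀ ^ (γ - 1) :=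
          Real.div_rpow hr.le hr₀.le (γ - 1)
        have e2 : r₀ ^ γ = r₀ * r₀ ^ (γ - 1) := by
          have h := Real.rpow_add hr₀ 1 (γ - 1)
          rw [Real.rpow_one] at h
          rw [← h]
          congr 1
          ring
        rw [e1, e2]
        have hp1 : (0:ℝ) < r₀ ^ (γ - 1) := Real.rpow_pos_of_pos hr₀ _
        field_simp
end

section
/- Let C₁, C₂ > 0, 0 < γ < 1, and suppose a nonnegative quantity Q satisfies, for every r ∈ (0, r₀], Q ≤ C₁ E ((r/r₀)^β + m^{δ^{b|ln(a r/r₀)| + 1}}) for given β > 0, δ ∈ (0,1), a, b > 0, and m ∈ (0,1). Then there exists C depending only on C₁, β, δ, a, b such that Q ≤ C E |ln m|^{-β/(2b|ln δ|)} for all sufficiently small m. -/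
/-- Optimization in `r` of a bound combining a power `(r/r₀)^β` with a doubly
exponential factor `m^{δ^{b|ln(ar/r₀)|+1}}`: it yields a single logarithmic
modulus `C E |ln m|^{-β/(2b|ln δ|)}` for all sufficiently small `m`. -/
theorem optimize_r (C₁ β δ a b : ℝ) (hC₁ : 0 < C₁) (hβ : 0 < β)
    (hδ0 : 0 < δ) (hδ1 : δ < 1) (ha : 0 < a) (hb : 0 < b) :
    ∃ C : ℝ, 0 < C ∧ ∃ m₀ : ℝ, m₀ ∈ Set.Ioo (0 : ℝ) 1 ∧
      ∀ m : ℝ, m ∈ Set.Ioo (0 : ℝ) m₀ →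
        ∀ r₀ E Q : ℝ, 0 < r₀ → 0 ≤ E → 0 ≤ Q →
          (∀ r : ℝ, r ∈ Set.Ioc (0 : ℝ) r₀ →
            Q ≤ C₁ * E * ((r / r₀) ^ β +
              m ^ (δ ^ (b * |Real.log (a * r / r₀)| + 1)))) →
          Q ≤ C * E * |Real.log m| ^ (-(β / (2 * b * |Real.log δ|))) := by
  have hlogδ : Real.log δ < 0 := Real.log_neg hδ0 hδ1
  obtain ⟨D, hD⟩ : ∃ x : ℝ, x = |Real.log δ| := ⟨_, rfl⟩
  have hDval : D = -Real.log δ := by rw [hD]; exact abs_of_neg hlogδ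
  have hD0 : 0 < D := by rw [hDval]; linarith
  obtain ⟨p, hp⟩ : ∃ x : ℝ, x = β / (2 * b * D) := ⟨_, rfl⟩
  have hp0 : 0 < p := hp ▸ div_pos hβ (by positivity)
  obtain ⟨θ, hθ⟩ : ∃ x : ℝ, x = 1 / (2 * b * D) := ⟨_, rfl⟩
  have hθ0 : 0 < θ := by rw [hθ]; positivity
  obtain ⟨K, hK⟩ : ∃ x : ℝ, x = b * |Real.log a| + 1 := ⟨_, rfl⟩
  obtain ⟨c, hc⟩ : ∃ x : ℝ, x = δ ^ K := ⟨_, rfl⟩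
  have hc0 : 0 < c := hc ▸ Real.rpow_pos_of_pos hδ0 K
  obtain ⟨A, hA⟩ : ∃ x : ℝ, x = 4 * p / c := ⟨_, rfl⟩
  have hA0 : 0 < A := by rw [hA]; positivity
  obtain ⟨L₀, hL₀def⟩ : ∃ x : ℝ, x = max (Real.exp 1) (A ^ (4 : ℕ)) := ⟨_, rfl⟩
  have hL₀e : Real.exp 1 ≤ L₀ := hL₀def ▸ le_max_left _ _
  have hL₀A : A ^ (4 : ℕ) ≤ L₀ := hL₀def ▸ le_max_right _ _
  have hL₀0 : 0 < L₀ := lt_of_lt_of_le (Real.exp_pos 1) hL₀e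
  refine ⟨2 * C₁, by positivity, Real.exp (-L₀), ⟨Real.exp_pos _, ?_⟩, ?_⟩
  · calc Real.exp (-L₀) < Real.exp 0 := Real.exp_lt_exp.mpr (by linarith)
      _ = 1 := Real.exp_zero
  intro m hm r₀ E Q hr₀ hE hQ hbound
  obtain ⟨hm0, hmu⟩ := hm
  obtain ⟨L, hLdef⟩ : ∃ x : ℝ, x = -Real.log m := ⟨_, rfl⟩
  have hlogm : Real.log m = -L := by rw [hLdef]; ring
  have hLgt : L₀ < L := by
    have := Real.log_lt_log hm0 hmu
    rw [Real.log_exp] at this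
    rw [hLdef]; linarith
  have hL1 : 1 < L := by
    have := Real.add_one_le_exp 1
    linarith [hL₀e]
  have hL0 : 0 < L := by linarith
  have hm1 : m < 1 := by
    have h1 : Real.log m < 0 := by rw [hlogm]; linarith
    nlinarith [Real.exp_log hm0, Real.exp_lt_one_iff.mpr h1]
  have habsm : |Real.log m| = L := by rw [hlogm, abs_of_neg (by linarith : -L < 0)]; ring
  have hlogL0 : 0 ≤ Real.log L := Real.log_nonneg hL1.le
  -- choose r
  obtain ⟨r, hr⟩ : ∃ x : ℝ, x = r₀ * L ^ (-θ) := ⟨_, rfl⟩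
  have hrpos : 0 < r := by rw [hr]; positivity
  have hratio : r / r₀ = L ^ (-θ) := by rw [hr]; field_simp
  have hrle : r ≤ r₀ := by
    have h1 : L ^ (-θ) ≤ 1 := Real.rpow_le_one_of_one_le_of_nonpos hL1.le (by linarith)
    rw [hr]; nlinarith
  have hbd := hbound r ⟨hrpos, hrle⟩
  -- first term
  have hterm1 : (r / r₀) ^ β = L ^ (-p) := by
    rw [hratio, ← Real.rpow_mul hL0.le]
    congr 1
    rw [hθ, hp]; field_simp
  -- second term
  have hexp_le : b * |Real.log (a * r / r₀)| + 1 ≤ K + Real.log L / (2 * D) := by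
    have hlogr : Real.log (a * r / r₀) = Real.log a + (-θ) * Real.log L := by
      have h0 : a * r / r₀ = a * L ^ (-θ) := by rw [hr]; field_simp
      rw [h0, Real.log_mul (ne_of_gt ha) (ne_of_gt (Real.rpow_pos_of_pos hL0 _)),
        Real.log_rpow hL0]
    have habs : |Real.log (a * r / r₀)| ≤ |Real.log a| + θ * Real.log L := by
      rw [hlogr]
      calc |Real.log a + (-θ) * Real.log L| ≤ |Real.log a| + |(-θ) * Real.log L| :=
            abs_add_le _ _
        _ = |Real.log a| + θ * Real.log L := by
            rw [abs_mul, abs_neg, abs_of_pos hθ0, abs_of_nonneg hlogL0]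
    have h5 : b * |Real.log (a * r / r₀)| ≤ b * (|Real.log a| + θ * Real.log L) :=
      mul_le_mul_of_nonneg_left habs hb.le
    have h6 : b * (|Real.log a| + θ * Real.log L)
        = b * |Real.log a| + Real.log L / (2 * D) := by
      rw [hθ]; field_simp
    rw [hK]
    linarith
  have hδexp : c * L ^ (-(1/2) : ℝ) ≤ δ ^ (b * |Real.log (a * r / r₀)| + 1) := by
    have h1 : δ ^ (K + Real.log L / (2 * D)) ≤ δ ^ (b * |Real.log (a * r / r₀)| + 1) :=
      Real.rpow_le_rpow_of_exponent_ge hδ0 hδ1.le hexp_le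
    have h2 : δ ^ (K + Real.log L / (2 * D)) = c * L ^ (-(1/2) : ℝ) := by
      rw [Real.rpow_add hδ0, hc]
      congr 1
      rw [Real.rpow_def_of_pos hδ0, Real.rpow_def_of_pos hL0]
      congr 1
      rw [hDval]
      have hne : Real.log δ ≠ 0 := ne_of_lt hlogδ
      field_simp
    linarith [h1, h2.symm.le]
  have hterm2 : m ^ (δ ^ (b * |Real.log (a * r / r₀)| + 1)) ≤
      Real.exp (-(c * L ^ ((1/2) : ℝ))) := by
    have h1 : m ^ (δ ^ (b * |Real.log (a * r / r₀)| + 1)) ≤ m ^ (c * L ^ (-(1/2) : ℝ)) :=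
      Real.rpow_le_rpow_of_exponent_ge hm0 hm1.le hδexp
    have hs : L ^ ((1/2) : ℝ) * L ^ (-(1/2) : ℝ) = 1 := by
      rw [← Real.rpow_add hL0]; norm_num
    have hLsplit : L = L ^ ((1/2) : ℝ) * L ^ ((1/2) : ℝ) := by
      rw [← Real.rpow_add hL0]; norm_num
    have h2 : m ^ (c * L ^ (-(1/2) : ℝ)) = Real.exp (-(c * L ^ ((1/2) : ℝ))) := by
      rw [Real.rpow_def_of_pos hm0, hlogm]
      congr 1
      linear_combination (-(c * L ^ (-(1/2) : ℝ))) * hLsplit + (-(c * L ^ ((1/2) : ℝ))) * hs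
    linarith [h1, h2.le]
  have hexp_poly : Real.exp (-(c * L ^ ((1/2) : ℝ))) ≤ L ^ (-p) := by
    rw [show L ^ (-p) = Real.exp (Real.log L * (-p)) from Real.rpow_def_of_pos hL0 _]
    apply Real.exp_le_exp.mpr
    have hq4 : (0:ℝ) < L ^ ((1/4) : ℝ) := Real.rpow_pos_of_pos hL0 _
    have hlog4 : Real.log L ≤ 4 * L ^ ((1/4) : ℝ) := by
      have h1 : Real.log (L ^ ((1/4):ℝ)) = (1/4) * Real.log L := Real.log_rpow hL0 _
      have h2 : Real.log (L ^ ((1/4):ℝ)) ≤ L ^ ((1/4):ℝ) - 1 :=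
        Real.log_le_sub_one_of_pos hq4
      linarith
    have hLA : A ≤ L ^ ((1/4) : ℝ) := by
      have hA4 : (A ^ (4:ℕ) : ℝ) ≤ L := le_trans hL₀A hLgt.le
      calc A = ((A ^ (4:ℕ) : ℝ)) ^ ((1/4) : ℝ) := by
            rw [← Real.rpow_natCast A 4, ← Real.rpow_mul hA0.le]
            norm_num
        _ ≤ L ^ ((1/4) : ℝ) := Real.rpow_le_rpow (by positivity) hA4 (by norm_num)
    have h4p : 4 * p ≤ c * L ^ ((1/4) : ℝ) := by
      have hcA : c * A = 4 * p := by rw [hA]; field_simp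
      have h9 := mul_le_mul_of_nonneg_left hLA hc0.le
      linarith
    have hsplit : L ^ ((1/2) : ℝ) = L ^ ((1/4) : ℝ) * L ^ ((1/4) : ℝ) := by
      rw [← Real.rpow_add hL0]; norm_num
    have hmain : p * Real.log L ≤ c * L ^ ((1/2) : ℝ) := by
      calc p * Real.log L ≤ p * (4 * L ^ ((1/4) : ℝ)) :=
            mul_le_mul_of_nonneg_left hlog4 hp0.le
        _ = (4 * p) * L ^ ((1/4) : ℝ) := by ring
        _ ≤ (c * L ^ ((1/4) : ℝ)) * L ^ ((1/4) : ℝ) :=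
            mul_le_mul_of_nonneg_right h4p hq4.le
        _ = c * (L ^ ((1/4) : ℝ) * L ^ ((1/4) : ℝ)) := by ring
        _ = c * L ^ ((1/2) : ℝ) := by rw [← hsplit]
    linarith [hmain]
  have hLp : (0:ℝ) ≤ L ^ (-p) := (Real.rpow_pos_of_pos hL0 _).le
  have hCE : 0 ≤ C₁ * E := by positivity
  have hgoal : Q ≤ 2 * C₁ * E * L ^ (-p) := by
    calc Q ≤ C₁ * E * ((r / r₀) ^ β + m ^ (δ ^ (b * |Real.log (a * r / r₀)| + 1))) := hbd
      _ ≤ C₁ * E * (L ^ (-p) + L ^ (-p)) := by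
          apply mul_le_mul_of_nonneg_left _ hCE
          have h7 := le_trans hterm2 hexp_poly
          linarith [hterm1.le, h7]
      _ = 2 * C₁ * E * L ^ (-p) := by ring
  rw [habsm, ← hD, ← hp]
  exact hgoal
end
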